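/- arXiv:2605.07853 — 2 statements merged into one kernel-verified Lean document; each statement's English description precedes it below -/
import Mathlib

section
/- The assignment {f_i} ↦ Φ_Γ is functorial: if f_i : G_i → G'_i and f'_i : G'_i → G''_i are set maps preserving identities, then the homomorphism K_Γ → K''_Γ induced by the compositions {f'_i ∘ f_i} equals the composition of the homomorphisms induced by {f_i} and {f'_i}; moreover, the identity set maps induce the identity homomorphism on K_Γ. -/
open Monoid
open scoped commutatorElement

namespace GPaper

variable {ι : Type*}

/-- The relator subgroup of the graph product: normal closure of commutators of
elements of vertex groups at adjacent vertices. -/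
def Rels (Γ : SimpleGraph ι) (G : ι → Type*) [∀ i, Group (G i)] : Subgroup (Monoid.CoprodI G) :=
  Subgroup.normalClosure
    { x | ∃ (i j : ι) (g : G i) (h : G j), Γ.Adj i j ∧
          x = ⁅Monoid.CoprodI.of g, Monoid.CoprodI.of h⁆ }

instance (Γ : SimpleGraph ι) (G : ι → Type*) [∀ i, Group (G i)] : (Rels Γ G).Normal :=
  Subgroup.normalClosure_normal

/-- The graph product of the groups `G i` over the simplicial graph `Γ`. -/
abbrev GP (Γ : SimpleGraph ι) (G : ι → Type*) [∀ i, Group (G i)] :=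
  Monoid.CoprodI G ⧸ Rels Γ G

/-- The canonical inclusion of a vertex group into the graph product. -/
def of (Γ : SimpleGraph ι) (G : ι → Type*) [∀ i, Group (G i)] (i : ι) : G i →* GP Γ G :=
  (QuotientGroup.mk' (Rels Γ G)).comp Monoid.CoprodI.of

/-- The canonical homomorphism from the graph product to the direct product. -/
def proj [DecidableEq ι] (Γ : SimpleGraph ι) (G : ι → Type*) [∀ i, Group (G i)] :
    GP Γ G →* (∀ i, G i) :=
  QuotientGroup.lift (Rels Γ G) (Monoid.CoprodI.lift (fun i => MonoidHom.mulSingle G i)) (by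
    intro x hx
    refine Subgroup.normalClosure_le_normal ?_ hx
    rintro y ⟨i, j, g, h, hadj, rfl⟩
    have hij : i ≠ j := hadj.ne
    simp only [SetLike.mem_coe, MonoidHom.mem_ker, map_commutatorElement,
      Monoid.CoprodI.lift_of]
    rw [commutatorElement_eq_one_iff_commute]
    exact Pi.mulSingle_commute hij g h)

/-- The canonical epimorphism `G_Γ → G_Γ'` when `Γ'` is obtained from `Γ` by adding edges. -/
def mapGraph (Γ Γ' : SimpleGraph ι) (hΓ : Γ ≤ Γ') (G : ι → Type*) [∀ i, Group (G i)] :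
    GP Γ G →* GP Γ' G :=
  QuotientGroup.lift (Rels Γ G) (QuotientGroup.mk' (Rels Γ' G)) (by
    intro x hx
    rw [QuotientGroup.ker_mk']
    refine Subgroup.normalClosure_le_normal ?_ hx
    rintro y ⟨i, j, g, h, hadj, rfl⟩
    exact Subgroup.subset_normalClosure ⟨i, j, g, h, hΓ hadj, rfl⟩)

/-- The element of the graph product represented by a word (list of syllables). -/
def wordProd (Γ : SimpleGraph ι) (G : ι → Type*) [∀ i, Group (G i)]
    (w : List (Σ i, G i)) : GP Γ G :=
  (w.map fun s => of Γ G s.1 s.2).prod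

/-- The image of a word in the direct product of the vertex groups. -/
def piProd [DecidableEq ι] (G : ι → Type*) [∀ i, Group (G i)]
    (w : List (Σ i, G i)) : ∀ i, G i :=
  (w.map fun s => Pi.mulSingle s.1 s.2).prod

/-- The ordered product of those syllables of a word that belong to `G i`. -/
def sylProd [DecidableEq ι] (G : ι → Type*) [∀ i, Group (G i)]
    (w : List (Σ i, G i)) (i : ι) : G i :=
  (w.filterMap fun s => if h : s.1 = i then some (cast (congrArg G h) s.2) else none).prod

/-- The normal (syllable) length of an element of a graph product:
the minimal number of syllables in a word representing it. -/
noncomputable def nl (Γ : SimpleGraph ι) (G : ι → Type*) [∀ i, Group (G i)]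
    (g : GP Γ G) : ℕ :=
  sInf { n | ∃ w : List (Σ i, G i), wordProd Γ G w = g ∧ w.length = n }

section Phi

open scoped Classical

variable [DecidableEq ι] {G G' : ι → Type*} [∀ i, Group (G i)] [∀ i, Group (G' i)]

/-- One step of the recursive construction of `Φ`: the new syllable
`f(π(w))⁻¹ · f(π(w)s)` (dropped if trivial), where `g = π(w)`. -/
noncomputable def phiStep (f : ∀ i, G i → G' i) (g : ∀ i, G i) (s : Σ i, G i) : List (Σ i, G' i) :=
  if (f s.1 (g s.1))⁻¹ * f s.1 (g s.1 * s.2) = 1 then []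
  else [⟨s.1, (f s.1 (g s.1))⁻¹ * f s.1 (g s.1 * s.2)⟩]

/-- Auxiliary recursion: process the word left to right, carrying the
image `g` of the prefix in the direct product. -/
noncomputable def phiAux (f : ∀ i, G i → G' i) : (∀ i, G i) → List (Σ i, G i) → List (Σ i, G' i)
  | _, [] => []
  | g, s :: w => phiStep f g s ++ phiAux f (g * Pi.mulSingle s.1 s.2) w

/-- The word map `Φ : S* → S'*` induced by the set maps `f i : G i → G' i`. -/
noncomputable def phiWord (f : ∀ i, G i → G' i) (w : List (Σ i, G i)) : List (Σ i, G' i) :=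
  phiAux f 1 w

end Phi


section Aux

open scoped Classical

variable [DecidableEq ι]

lemma wordProd_nil (Γ : SimpleGraph ι) (G : ι → Type*) [∀ i, Group (G i)] :
    wordProd Γ G [] = 1 := rfl

lemma wordProd_cons (Γ : SimpleGraph ι) (G : ι → Type*) [∀ i, Group (G i)]
    (s : Σ i, G i) (w : List (Σ i, G i)) :
    wordProd Γ G (s :: w) = of Γ G s.1 s.2 * wordProd Γ G w := by
  simp [wordProd]

lemma wordProd_append (Γ : SimpleGraph ι) (G : ι → Type*) [∀ i, Group (G i)]
    (u v : List (Σ i, G i)) :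
    wordProd Γ G (u ++ v) = wordProd Γ G u * wordProd Γ G v := by
  simp [wordProd]

variable {G G' G'' : ι → Type*} [∀ i, Group (G i)] [∀ i, Group (G' i)] [∀ i, Group (G'' i)]

lemma phiAux_comp (f : ∀ i, G i → G' i) (f' : ∀ i, G' i → G'' i) :
    ∀ (w : List (Σ i, G i)) (g : ∀ i, G i),
      phiAux f' (fun i => f i (g i)) (phiAux f g w) = phiAux (fun i => f' i ∘ f i) g w := by
  intro w
  induction w with
  | nil => intro g; rfl
  | cons s w ih =>
    intro g
    obtain ⟨i, x⟩ := s
    simp only [phiAux]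
    by_cases h : (f i (g i))⁻¹ * f i (g i * x) = 1
    · have hx : f i (g i * x) = f i (g i) := by
        have := congrArg (fun z => f i (g i) * z) h
        simpa [mul_inv_cancel_left] using this
      have hstep : phiStep f g ⟨i, x⟩ = [] := by
        simp only [phiStep]
        rw [if_pos]
        exact h
      have hstep' : phiStep (fun i => f' i ∘ f i) g ⟨i, x⟩ = [] := by
        simp only [phiStep, Function.comp]
        rw [if_pos]
        simp [hx]
      rw [hstep, hstep', List.nil_append, List.nil_append]
      have hacc : (fun j => f j (g j)) =
          fun j => f j ((g * Pi.mulSingle (⟨i, x⟩ : Σ i, G i).1 (⟨i, x⟩ : Σ i, G i).2) j) := by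
        funext j
        by_cases hj : j = i
        · subst hj; simp [Pi.mulSingle_eq_same, hx]
        · simp [Pi.mulSingle_eq_of_ne hj]
      rw [hacc, ih]
    · set y : G' i := (f i (g i))⁻¹ * f i (g i * x) with hy
      have hstep : phiStep f g ⟨i, x⟩ = [⟨i, y⟩] := by
        simp only [phiStep]
        rw [if_neg]
        exact h
      have hval : f i (g i) * y = f i (g i * x) := by
        rw [hy, mul_inv_cancel_left]
      rw [hstep, List.singleton_append]
      simp only [phiAux]
      have hstep2 : phiStep f' (fun j => f j (g j)) ⟨i, y⟩ =
          phiStep (fun j => f' j ∘ f j) g ⟨i, x⟩ := by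
        simp only [phiStep, Function.comp, hval]
      rw [hstep2]
      congr 1
      have hacc : ((fun j => f j (g j)) * Pi.mulSingle (⟨i, y⟩ : Σ i, G' i).1
            (⟨i, y⟩ : Σ i, G' i).2) =
          fun j => f j ((g * Pi.mulSingle (⟨i, x⟩ : Σ i, G i).1 (⟨i, x⟩ : Σ i, G i).2) j) := by
        funext j
        by_cases hj : j = i
        · subst hj
          simp [Pi.mulSingle_eq_same, hval]
        · simp [Pi.mulSingle_eq_of_ne hj]
      rw [hacc, ih]

lemma wordProd_phiAux_id (Γ : SimpleGraph ι) :
    ∀ (w : List (Σ i, G i)) (g : ∀ i, G i),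
      wordProd Γ G (phiAux (fun _ x => x) g w) = wordProd Γ G w := by
  intro w
  induction w with
  | nil => intro g; rfl
  | cons s w ih =>
    intro g
    obtain ⟨i, x⟩ := s
    simp only [phiAux, phiStep, inv_mul_cancel_left]
    by_cases h : x = 1
    · rw [if_pos h, List.nil_append, ih, wordProd_cons, h]
      simp
    · rw [if_neg h, List.singleton_append, wordProd_cons, wordProd_cons, ih]

end Aux

/-- Functoriality of `{f_i} ↦ Φ_Γ` on the kernel: compositions of
identity-preserving set maps induce the composition of the induced maps, and the
identity set maps induce the identity. (Stated at the level of representing words.) -/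
theorem stmt4 {ι : Type*} [DecidableEq ι] [Fintype ι] (Γ : SimpleGraph ι)
    (G G' G'' : ι → Type*) [∀ i, Group (G i)] [∀ i, Group (G' i)] [∀ i, Group (G'' i)]
    (f : ∀ i, G i → G' i) (f' : ∀ i, G' i → G'' i)
    (hf : ∀ i, f i 1 = 1) (hf' : ∀ i, f' i 1 = 1) :
    (∀ w : List (Σ i, G i), wordProd Γ G w ∈ (proj Γ G).ker →
        wordProd Γ G'' (phiWord (fun i => f' i ∘ f i) w) =
          wordProd Γ G'' (phiWord f' (phiWord f w))) ∧
    (∀ w : List (Σ i, G i), wordProd Γ G w ∈ (proj Γ G).ker →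
        wordProd Γ G (phiWord (fun _ x => x) w) = wordProd Γ G w) := by
  constructor
  · intro w _
    have h := phiAux_comp f f' w 1
    have h1 : (fun i => f i ((1 : ∀ i, G i) i)) = (1 : ∀ i, G' i) := by
      funext i; simp [hf]
    rw [h1] at h
    simp only [phiWord]
    rw [← h]
  · intro w _
    exact wordProd_phiAux_id Γ w 1

end GPaper
end

section
/- Let Γ be a finite simplicial graph with countable vertex groups {G_i}. Then the kernel K_Γ of G_Γ → ∏ G_i is a retract of the commutator subgroup [A_Γ, A_Γ] of the right-angled Artin group A_Γ on Γ, i.e., there exist homomorphisms ι : K_Γ → [A_Γ,A_Γ] and r : [A_Γ,A_Γ] → K_Γ with r∘ι = id. -/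
open Monoid
open scoped commutatorElement

namespace GPaper

variable {ι : Type*}

section Retract

variable [DecidableEq ι]

/-- Two homomorphisms out of a graph product agree if they agree on vertex groups. -/
theorem gp_hom_ext {Γ : SimpleGraph ι} {G : ι → Type*} [∀ i, Group (G i)]
    {M : Type*} [Monoid M] {F₁ F₂ : GP Γ G →* M}
    (h : ∀ i g, F₁ (of Γ G i g) = F₂ (of Γ G i g)) : F₁ = F₂ := by
  refine MonoidHom.ext fun x => ?_
  obtain ⟨y, rfl⟩ := QuotientGroup.mk'_surjective (Rels Γ G) x
  induction y using Monoid.CoprodI.induction_on with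
  | one => rw [map_one, map_one, map_one]
  | of i g => exact h i g
  | mul x y hx hy => rw [map_mul, map_mul, map_mul, hx, hy]

theorem of_commute {Γ : SimpleGraph ι} {G : ι → Type*} [∀ i, Group (G i)] {i j : ι}
    (h : Γ.Adj i j) (x : G i) (y : G j) : Commute (of Γ G i x) (of Γ G j y) := by
  rw [← commutatorElement_eq_one_iff_commute]
  have hmem : ⁅Monoid.CoprodI.of x, Monoid.CoprodI.of y⁆ ∈ Rels Γ G :=
    Subgroup.subset_normalClosure ⟨i, j, x, y, h, rfl⟩
  have h1 := (QuotientGroup.eq_one_iff (N := Rels Γ G)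
    ⁅Monoid.CoprodI.of x, Monoid.CoprodI.of y⁆).mpr hmem
  calc ⁅of Γ G i x, of Γ G j y⁆
      = (QuotientGroup.mk' (Rels Γ G)) ⁅Monoid.CoprodI.of x, Monoid.CoprodI.of y⁆ := by
        rw [map_commutatorElement]; rfl
    _ = 1 := h1

@[simp] theorem proj_of {Γ : SimpleGraph ι} {G : ι → Type*} [∀ i, Group (G i)]
    (i : ι) (g : G i) : proj Γ G (of Γ G i g) = Pi.mulSingle i g := by
  simp [proj, of]

section Psi

variable {G G' G'' : ι → Type*} [∀ i, Group (G i)] [∀ i, Group (G' i)] [∀ i, Group (G'' i)]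

/-- Translation action of the direct product on functions out of it. -/
def actHom (G : ι → Type*) [∀ i, Group (G i)] (H : Type*) [Group H] :
    (∀ i, G i) →* MulAut ((∀ i, G i) → H) where
  toFun a :=
    { toFun := fun α g => α (g * a)
      invFun := fun α g => α (g * a⁻¹)
      left_inv := fun α => funext fun g =>
        show α (g * a⁻¹ * a) = α g by rw [inv_mul_cancel_right]
      right_inv := fun α => funext fun g =>
        show α (g * a * a⁻¹) = α g by rw [mul_inv_cancel_right]
      map_mul' := fun α β => rfl }
  map_one' := MulEquiv.ext fun α => funext fun g => by simp
  map_mul' a b := MulEquiv.ext fun α => funext fun g => (congrArg α (mul_assoc g a b)).symm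

/-- The unrestricted "wreath-like" group in which the cocycle `Φ` lives. -/
abbrev Wr (G : ι → Type*) [∀ i, Group (G i)] (H : Type*) [Group H] :=
  ((∀ i, G i) → H) ⋊[actHom G H] (∀ i, G i)

variable (Γ : SimpleGraph ι)

/-- The image of a vertex group under the cocycle homomorphism induced by the
set maps `f i : G i → G' i`. -/
def psiGens (f : ∀ i, G i → G' i) (i : ι) : G i →* Wr G (GP Γ G') where
  toFun s := ⟨fun g => of Γ G' i ((f i (g i))⁻¹ * f i (g i * s)), Pi.mulSingle i s⟩
  map_one' := by
    refine SemidirectProduct.ext ?_ ?_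
    · funext g
      simp [mul_one]
    · simp
  map_mul' s t := by
    refine SemidirectProduct.ext ?_ ?_
    · funext g
      show of Γ G' i ((f i (g i))⁻¹ * f i (g i * (s * t)))
        = of Γ G' i ((f i (g i))⁻¹ * f i (g i * s)) *
          of Γ G' i ((f i ((g * Pi.mulSingle i s) i))⁻¹ * f i ((g * Pi.mulSingle i s) i * t))
      rw [← map_mul, Pi.mul_apply, Pi.mulSingle_eq_same, ← mul_assoc]
      congr 1
      group
    · show Pi.mulSingle i (s * t) = Pi.mulSingle i s * Pi.mulSingle i t
      exact (MonoidHom.mulSingle G i).map_mul s t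

/-- The cocycle homomorphism `Ψ` induced by arbitrary set maps `f i : G i → G' i`. -/
def Psi (f : ∀ i, G i → G' i) : GP Γ G →* Wr G (GP Γ G') :=
  QuotientGroup.lift (Rels Γ G) (Monoid.CoprodI.lift (psiGens Γ f)) (by
    intro x hx
    refine Subgroup.normalClosure_le_normal ?_ hx
    rintro y ⟨i, j, a, b, hadj, rfl⟩
    have hij : i ≠ j := hadj.ne
    simp only [SetLike.mem_coe, MonoidHom.mem_ker, map_commutatorElement,
      Monoid.CoprodI.lift_of]
    rw [commutatorElement_eq_one_iff_commute]
    refine SemidirectProduct.ext ?_ ?_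
    · funext g
      show of Γ G' i ((f i (g i))⁻¹ * f i (g i * a)) *
          of Γ G' j ((f j ((g * Pi.mulSingle i a) j))⁻¹ * f j ((g * Pi.mulSingle i a) j * b))
        = of Γ G' j ((f j (g j))⁻¹ * f j (g j * b)) *
          of Γ G' i ((f i ((g * Pi.mulSingle j b) i))⁻¹ * f i ((g * Pi.mulSingle j b) i * a))
      rw [Pi.mul_apply, Pi.mul_apply, Pi.mulSingle_eq_of_ne hij.symm,
        Pi.mulSingle_eq_of_ne hij, mul_one, mul_one]
      exact (of_commute hadj _ _).eq
    · show Pi.mulSingle i a * Pi.mulSingle j b = Pi.mulSingle j b * Pi.mulSingle i a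
      exact (Pi.mulSingle_commute hij a b).eq)

theorem Psi_of (f : ∀ i, G i → G' i) (i : ι) (s : G i) :
    Psi Γ f (of Γ G i s) = psiGens Γ f i s := by
  simp [Psi, of]

theorem psi_right (f : ∀ i, G i → G' i) (x : GP Γ G) :
    (Psi Γ f x).right = proj Γ G x := by
  have h : SemidirectProduct.rightHom.comp (Psi Γ f) = proj Γ G := by
    refine gp_hom_ext fun i s => ?_
    rw [MonoidHom.comp_apply, Psi_of, proj_of]
    rfl
  exact DFunLike.congr_fun h x

theorem psi_left_proj (f : ∀ i, G i → G' i) (x : GP Γ G) : ∀ (g : ∀ i, G i),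
    proj Γ G' ((Psi Γ f x).left g)
      = fun i => (f i (g i))⁻¹ * f i (g i * proj Γ G x i) := by
  induction x using QuotientGroup.induction_on with
  | H y =>
    induction y using Monoid.CoprodI.induction_on with
    | one =>
      intro g
      rw [show ((1 : Monoid.CoprodI G) : GP Γ G) = 1 from rfl, map_one, map_one]
      funext i
      simp
    | of i s =>
      intro g
      rw [show ((Monoid.CoprodI.of s : Monoid.CoprodI G) : GP Γ G) = of Γ G i s from rfl,
        Psi_of, proj_of]
      show proj Γ G' (of Γ G' i ((f i (g i))⁻¹ * f i (g i * s))) = _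
      rw [proj_of]
      funext i'
      by_cases hii : i' = i
      · subst hii
        rw [Pi.mulSingle_eq_same, Pi.mulSingle_eq_same]
      · rw [Pi.mulSingle_eq_of_ne hii, Pi.mulSingle_eq_of_ne hii, mul_one]
        simp
    | mul x y hx hy =>
      intro g
      rw [show ((x * y : Monoid.CoprodI G) : GP Γ G)
          = (x : GP Γ G) * (y : GP Γ G) from rfl, map_mul, map_mul,
        SemidirectProduct.mul_left]
      show proj Γ G' ((Psi Γ f (x : GP Γ G)).left g *
        (Psi Γ f (y : GP Γ G)).left (g * (Psi Γ f (x : GP Γ G)).right)) = _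
      rw [map_mul, hx g, hy _, psi_right]
      funext i
      show ((f i (g i))⁻¹ * f i (g i * proj Γ G (x : GP Γ G) i)) *
          ((f i ((g * proj Γ G (x : GP Γ G)) i))⁻¹ *
            f i ((g * proj Γ G (x : GP Γ G)) i * proj Γ G (y : GP Γ G) i))
        = (f i (g i))⁻¹ * f i (g i * (proj Γ G (x : GP Γ G) i *
            proj Γ G (y : GP Γ G) i))
      rw [Pi.mul_apply, ← mul_assoc (g i)]
      group

/-- The homomorphism induced on kernels by arbitrary set maps `f i : G i → G' i`. -/
def PhiKer (f : ∀ i, G i → G' i) : (proj Γ G).ker →* (proj Γ G').ker where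
  toFun k := ⟨(Psi Γ f (k : GP Γ G)).left 1, by
    rw [MonoidHom.mem_ker, psi_left_proj]
    have hk : proj Γ G (k : GP Γ G) = 1 := k.2
    rw [hk]
    funext i
    simp⟩
  map_one' := by
    refine Subtype.ext ?_
    show (Psi Γ f ((1 : (proj Γ G).ker) : GP Γ G)).left 1 = 1
    rw [OneMemClass.coe_one, map_one]
    rfl
  map_mul' k₁ k₂ := by
    refine Subtype.ext ?_
    show (Psi Γ f ((k₁ : GP Γ G) * (k₂ : GP Γ G))).left 1
      = (Psi Γ f (k₁ : GP Γ G)).left 1 * (Psi Γ f (k₂ : GP Γ G)).left 1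
    rw [map_mul, SemidirectProduct.mul_left]
    show (Psi Γ f (k₁ : GP Γ G)).left 1 *
        (Psi Γ f (k₂ : GP Γ G)).left (1 * (Psi Γ f (k₁ : GP Γ G)).right) = _
    rw [psi_right, k₁.2, mul_one]

theorem PhiKer_apply (f : ∀ i, G i → G' i) (k : (proj Γ G).ker) :
    (PhiKer Γ f k : GP Γ G') = (Psi Γ f (k : GP Γ G)).left 1 := rfl

/-- The cocycle homomorphism for identity maps is the tautological one. -/
theorem Psi_id : Psi Γ (fun i (x : G i) => x)
    = ({ toFun := fun w => ⟨fun _ => w, proj Γ G w⟩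
         map_one' := SemidirectProduct.ext rfl (map_one _)
         map_mul' := fun u v => SemidirectProduct.ext rfl (map_mul _ u v) } :
        GP Γ G →* Wr G (GP Γ G)) := by
  refine gp_hom_ext fun i s => ?_
  rw [Psi_of]
  refine SemidirectProduct.ext ?_ ?_
  · funext g
    show of Γ G i ((g i)⁻¹ * (g i * s)) = of Γ G i s
    rw [inv_mul_cancel_left]
  · show Pi.mulSingle i s = proj Γ G (of Γ G i s)
    rw [proj_of]

theorem PhiKer_id : PhiKer Γ (fun i (x : G i) => x) = MonoidHom.id (proj Γ G).ker := by
  ext k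
  show ((PhiKer Γ (fun i (x : G i) => x) k : (proj Γ G).ker) : GP Γ G) = (k : GP Γ G)
  rw [PhiKer_apply, Psi_id]
  rfl

/-- Functoriality in `f`: the cocycle of a composite. -/
theorem Psi_comp_left (f : ∀ i, G i → G' i) (f' : ∀ i, G' i → G'' i) (x : GP Γ G) :
    ∀ g, (Psi Γ (fun i => f' i ∘ f i) x).left g
      = (Psi Γ f' ((Psi Γ f x).left g)).left (fun i => f i (g i)) := by
  induction x using QuotientGroup.induction_on with
  | H y =>
    induction y using Monoid.CoprodI.induction_on with
    | one =>
      intro g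
      rw [show ((1 : Monoid.CoprodI G) : GP Γ G) = 1 from rfl, map_one]
      show (1 : Wr G (GP Γ G'')).left g
        = (Psi Γ f' ((1 : Wr G (GP Γ G')).left g)).left (fun i => f i (g i))
      rw [show (1 : Wr G (GP Γ G')).left g = (1 : GP Γ G') from rfl, map_one]
      rfl
    | of i s =>
      intro g
      rw [show ((Monoid.CoprodI.of s : Monoid.CoprodI G) : GP Γ G) = of Γ G i s from rfl,
        Psi_of, Psi_of]
      show of Γ G'' i ((f' i (f i (g i)))⁻¹ * f' i (f i (g i * s)))
        = (Psi Γ f' (of Γ G' i ((f i (g i))⁻¹ * f i (g i * s)))).left (fun i => f i (g i))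
      rw [Psi_of]
      show _ = of Γ G'' i ((f' i (f i (g i)))⁻¹ *
          f' i (f i (g i) * ((f i (g i))⁻¹ * f i (g i * s))))
      rw [mul_inv_cancel_left]
    | mul x y hx hy =>
      intro g
      rw [show ((x * y : Monoid.CoprodI G) : GP Γ G)
          = (x : GP Γ G) * (y : GP Γ G) from rfl, map_mul, map_mul]
      show (Psi Γ (fun i => f' i ∘ f i) (x : GP Γ G)).left g *
          (Psi Γ (fun i => f' i ∘ f i) (y : GP Γ G)).left
            (g * (Psi Γ (fun i => f' i ∘ f i) (x : GP Γ G)).right)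
        = (Psi Γ f' ((Psi Γ f (x : GP Γ G)).left g *
            (Psi Γ f (y : GP Γ G)).left (g * (Psi Γ f (x : GP Γ G)).right))).left
            (fun i => f i (g i))
      rw [map_mul]
      show _ = (Psi Γ f' ((Psi Γ f (x : GP Γ G)).left g)).left (fun i => f i (g i)) *
          (Psi Γ f' ((Psi Γ f (y : GP Γ G)).left
              (g * (Psi Γ f (x : GP Γ G)).right))).left
            ((fun i => f i (g i)) * (Psi Γ f' ((Psi Γ f (x : GP Γ G)).left g)).right)
      have harg : (fun i => f i (g i)) * (Psi Γ f' ((Psi Γ f (x : GP Γ G)).left g)).right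
          = fun i => f i ((g * (Psi Γ f (x : GP Γ G)).right) i) := by
        simp only [psi_right, psi_left_proj]
        funext i
        simp [mul_inv_cancel_left]
      rw [harg]
      simp only [psi_right]
      rw [hx g, hy (g * proj Γ G (x : GP Γ G))]

theorem PhiKer_comp (f : ∀ i, G i → G' i) (f' : ∀ i, G' i → G'' i)
    (hf : ∀ i, f i 1 = 1) :
    (PhiKer Γ f').comp (PhiKer Γ f) = PhiKer Γ (fun i => f' i ∘ f i) := by
  refine MonoidHom.ext fun k => Subtype.ext ?_
  show ((PhiKer Γ f' (PhiKer Γ f k) : (proj Γ G'').ker) : GP Γ G'')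
    = ((PhiKer Γ (fun i => f' i ∘ f i) k : (proj Γ G'').ker) : GP Γ G'')
  rw [PhiKer_apply, PhiKer_apply, PhiKer_apply,
    Psi_comp_left Γ f f' (k : GP Γ G) 1]
  rw [show (fun i => f i ((1 : ∀ i, G i) i)) = (1 : ∀ i, G' i) from funext fun i => hf i]

end Psi

theorem ker_proj_eq_commutator [Fintype ι] (Γ : SimpleGraph ι)
    (G' : ι → Type*) [∀ i, CommGroup (G' i)] :
    (proj Γ G').ker = commutator (GP Γ G') := by
  refine le_antisymm ?_ (Abelianization.commutator_subset_ker _)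
  intro x hx
  -- the product-of-coordinates homomorphism into the abelianization
  have hu : ∀ (u : (∀ i, G' i) →* Abelianization (GP Γ G')),
      (∀ i s, u (Pi.mulSingle i s) = Abelianization.of (of Γ G' i s)) →
      x ∈ commutator (GP Γ G') := by
    intro u hus
    have hcomp : u.comp (proj Γ G') = Abelianization.of := by
      refine gp_hom_ext fun i s => ?_
      rw [MonoidHom.comp_apply, proj_of, hus]
    have h1 : Abelianization.of x = 1 := by
      rw [← hcomp, MonoidHom.comp_apply, MonoidHom.mem_ker.mp hx, map_one]
    exact (QuotientGroup.eq_one_iff x).mp h1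
  refine hu ⟨⟨fun a => ∏ i, Abelianization.of (of Γ G' i (a i)), by simp⟩, fun a b => by
      simp only [Pi.mul_apply, map_mul, Finset.prod_mul_distrib]⟩ ?_
  intro i s
  show (∏ i', Abelianization.of (of Γ G' i' (Pi.mulSingle i s i'))) = _
  refine Finset.prod_eq_single_of_mem i (Finset.mem_univ i) ?_ |>.trans ?_
  · intro j _ hj
    rw [Pi.mulSingle_eq_of_ne hj, map_one, map_one]
  · rw [Pi.mulSingle_eq_same]

end Retract

/-- If each vertex group is countable, the kernel `K_Γ` is a retract
of the commutator subgroup of the right-angled Artin group on `Γ`. -/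
theorem stmt11 {ι : Type*} [DecidableEq ι] [Fintype ι] (Γ : SimpleGraph ι)
    (G : ι → Type*) [∀ i, Group (G i)] [∀ i, Countable (G i)] :
    ∃ (j : (proj Γ G).ker →* commutator (GP Γ (fun _ : ι => Multiplicative ℤ)))
      (r : (commutator (GP Γ (fun _ : ι => Multiplicative ℤ)) : Subgroup _) →* (proj Γ G).ker),
      r.comp j = MonoidHom.id _ := by
  classical
  have hchoice : ∀ i, ∃ e : G i → ℕ, Function.Injective e := fun i =>
    Countable.exists_injective_nat (G i)
  choose e he using hchoice
  let f : ∀ i, G i → Multiplicative ℤ :=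
    fun i x => Multiplicative.ofAdd ((e i x : ℤ) - (e i 1 : ℤ))
  have hf1 : ∀ i, f i 1 = 1 := fun i => by simp [f]
  have hfinj : ∀ i, Function.Injective (f i) := by
    intro i a b hab
    apply he i
    have h2 := congrArg Multiplicative.toAdd hab
    simpa [f, sub_left_inj, Int.natCast_inj] using h2
  let h : ∀ i, Multiplicative ℤ → G i := fun i => Function.invFun (f i)
  have hh : ∀ i x, h i (f i x) = x := fun i => Function.leftInverse_invFun (hfinj i)
  have hker := ker_proj_eq_commutator Γ (fun _ : ι => Multiplicative ℤ)
  refine ⟨(Subgroup.inclusion hker.le).comp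
      (PhiKer Γ (G := G) (G' := fun _ : ι => Multiplicative ℤ) f),
    (PhiKer Γ (G := fun _ : ι => Multiplicative ℤ) (G' := G) h).comp
      (Subgroup.inclusion hker.ge), ?_⟩
  have hfh : (PhiKer Γ (G := fun _ : ι => Multiplicative ℤ) (G' := G) h).comp
      (PhiKer Γ (G := G) (G' := fun _ : ι => Multiplicative ℤ) f)
      = MonoidHom.id (proj Γ G).ker := by
    rw [PhiKer_comp Γ f h hf1]
    have hid : (fun i => h i ∘ f i) = fun i (x : G i) => x :=
      funext fun i => funext fun x => hh i x
    rw [hid, PhiKer_id]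
  ext k
  simp only [MonoidHom.comp_apply, MonoidHom.id_apply]
  rw [show (Subgroup.inclusion hker.ge) ((Subgroup.inclusion hker.le)
      (PhiKer Γ (G := G) (G' := fun _ : ι => Multiplicative ℤ) f k))
      = PhiKer Γ (G := G) (G' := fun _ : ι => Multiplicative ℤ) f k from Subtype.ext rfl]
  have hfin := DFunLike.congr_fun hfh k
  simpa using hfin

end GPaper
end
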